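/- The generating function of Grand Motzkin paths (paths with steps +1, -1, 0 from height 0 back to height 0, with no nonnegativity constraint) equals Σ_{k≥0} z^{2k} M(z)^{2k+1}, where M is the Motzkin generating function. -/

import Mathlib

open PowerSeries

/-- Paths with steps in {-1,0,1} of length `n` and total sum `j`. -/
def GMPath (n : ℕ) (j : ℤ) : Type :=
  {s : Fin n → ℤ // (∀ i, s i = -1 ∨ s i = 0 ∨ s i = 1) ∧ (∑ i, s i) = j}

/-- The trinomial array. -/
def tri : ℕ → ℤ → ℕ
  | 0, j => if j = 0 then 1 else 0
  | n+1, j => tri n (j-1) + tri n j + tri n (j+1)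

instance (n : ℕ) (j : ℤ) : Finite (GMPath n j) := by
  apply Finite.of_injective (fun s : GMPath n j =>
    (fun i => (⟨(s.1 i + 1).toNat, by have := s.2.1 i; omega⟩ : Fin 3) : Fin n → Fin 3))
  intro s t h
  apply Subtype.ext; funext i
  have hs := s.2.1 i
  have ht := t.2.1 i
  have hh := congrFun h i
  simp only [Fin.mk.injEq] at hh
  omega

/-- Remove the last step. -/
def GMPath.peel {n : ℕ} {j : ℤ} (s : GMPath (n+1) j) {m : ℤ}
    (hm : j - s.1 (Fin.last n) = m) : GMPath n m :=
  ⟨Fin.init s.1, fun i => s.2.1 i.castSucc, by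
    have h2 := s.2.2
    rw [Fin.sum_univ_castSucc] at h2
    show (∑ i : Fin n, s.1 i.castSucc) = m
    omega⟩

/-- Append a step. -/
def GMPath.grow {n : ℕ} {m : ℤ} (t : GMPath n m) (a : ℤ) (ha : a = -1 ∨ a = 0 ∨ a = 1)
    {j : ℤ} (hj : m + a = j) : GMPath (n+1) j :=
  ⟨Fin.snoc t.1 a, by
    refine ⟨fun i => ?_, ?_⟩
    · refine Fin.lastCases ?_ (fun k => ?_) i
      · simpa using ha
      · simpa using t.2.1 k
    · rw [Fin.sum_univ_castSucc]
      simp only [Fin.snoc_castSucc, Fin.snoc_last]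
      rw [t.2.2]; exact hj⟩

def gmEquiv (n : ℕ) (j : ℤ) :
    GMPath (n+1) j ≃ (GMPath n (j+1) ⊕ GMPath n j) ⊕ GMPath n (j-1) where
  toFun s :=
    if h : s.1 (Fin.last n) = -1 then
      Sum.inl (Sum.inl (s.peel (by omega)))
    else if h0 : s.1 (Fin.last n) = 0 then
      Sum.inl (Sum.inr (s.peel (by omega)))
    else
      Sum.inr (s.peel (by
        have := s.2.1 (Fin.last n); omega))
  invFun x :=
    match x with
    | Sum.inl (Sum.inl t) => t.grow (-1) (by norm_num) (by ring)
    | Sum.inl (Sum.inr t) => t.grow 0 (by norm_num) (by ring)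
    | Sum.inr t => t.grow 1 (by norm_num) (by ring)
  left_inv s := by
    dsimp only
    rcases s.2.1 (Fin.last n) with h | h | h
    · rw [dif_pos h]
      apply Subtype.ext
      have h2 := Fin.snoc_init_self s.1
      rw [h] at h2
      exact h2
    · rw [dif_neg (by rw [h]; norm_num), dif_pos h]
      apply Subtype.ext
      have h2 := Fin.snoc_init_self s.1
      rw [h] at h2
      exact h2
    · rw [dif_neg (by rw [h]; norm_num), dif_neg (by rw [h]; norm_num)]
      apply Subtype.ext
      have h2 := Fin.snoc_init_self s.1
      rw [h] at h2
      exact h2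
  right_inv x := by
    rcases x with (t | t) | t
    · have hl : (Fin.snoc t.1 (-1) : Fin (n+1) → ℤ) (Fin.last n) = -1 := Fin.snoc_last _ _
      dsimp only [GMPath.grow]
      rw [dif_pos hl]
      refine congrArg _ (congrArg _ (Subtype.ext ?_))
      simp [GMPath.peel]
    · have hl : (Fin.snoc t.1 0 : Fin (n+1) → ℤ) (Fin.last n) = 0 := Fin.snoc_last _ _
      dsimp only [GMPath.grow]
      rw [dif_neg (by rw [hl]; norm_num), dif_pos hl]
      refine congrArg _ (congrArg _ (Subtype.ext ?_))
      simp [GMPath.peel]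
    · have hl : (Fin.snoc t.1 1 : Fin (n+1) → ℤ) (Fin.last n) = 1 := Fin.snoc_last _ _
      dsimp only [GMPath.grow]
      rw [dif_neg (by rw [hl]; norm_num), dif_neg (by rw [hl]; norm_num)]
      refine congrArg _ (Subtype.ext ?_)
      simp [GMPath.peel]

lemma card_gmpath (n : ℕ) : ∀ j : ℤ, Nat.card (GMPath n j) = tri n j := by
  induction n with
  | zero =>
    intro j
    by_cases h : j = 0
    · subst h
      haveI : Unique (GMPath 0 0) :=
        { default := ⟨fun i => i.elim0, fun i => i.elim0, by simp⟩
          uniq := fun x => Subtype.ext (funext fun i => i.elim0) }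
      simp [tri, Nat.card_unique]
    · haveI : IsEmpty (GMPath 0 j) := ⟨fun s => h (by simpa using s.2.2.symm)⟩
      simp [tri, h, Nat.card_of_isEmpty]
  | succ n ih =>
    intro j
    rw [Nat.card_congr (gmEquiv n j), Nat.card_sum, Nat.card_sum, ih, ih, ih]
    show tri n (j+1) + tri n j + tri n (j-1) = tri (n+1) j
    rw [tri]
    omega

noncomputable def Cser (M : PowerSeries ℚ) : PowerSeries ℚ := (1 - X - 2 * X^2 * M)⁻¹

lemma hDC (M : PowerSeries ℚ) : (1 - X - 2 * X^2 * M) * Cser M = 1 := by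
  apply PowerSeries.mul_inv_cancel
  simp [map_sub, map_mul, map_pow, constantCoeff_X]

lemma key (M : PowerSeries ℚ) (hM : M = 1 + X * M + X ^ 2 * M ^ 2) :
    ∀ (n : ℕ) (j : ℤ), (tri n j : ℚ) = coeff (R := ℚ) n (Cser M * (X * M) ^ j.natAbs) := by
  have FE : ∀ j : ℤ, Cser M * (X * M) ^ j.natAbs =
      (if j = 0 then 1 else 0) +
        X * (Cser M * (X * M) ^ (j - 1).natAbs + Cser M * (X * M) ^ j.natAbs +
          Cser M * (X * M) ^ (j + 1).natAbs) := by
    intro j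
    by_cases h0 : j = 0
    · subst h0
      rw [if_pos rfl]
      have h1 : ((0:ℤ) - 1).natAbs = 1 := by decide
      have h3 : ((0:ℤ) + 1).natAbs = 1 := by decide
      rw [h1, h3, Int.natAbs_zero]
      linear_combination hDC M
    · rw [if_neg h0]
      rcases lt_or_gt_of_ne h0 with hneg | hpos
      · set m := j.natAbs - 1 with hm
        have h1 : (j - 1).natAbs = m + 2 := by omega
        have h2 : j.natAbs = m + 1 := by omega
        have h3 : (j + 1).natAbs = m := by omega
        rw [h1, h2, h3]
        linear_combination (X * Cser M * (X*M)^m) * hM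
      · set m := j.natAbs - 1 with hm
        have h1 : (j - 1).natAbs = m := by omega
        have h2 : j.natAbs = m + 1 := by omega
        have h3 : (j + 1).natAbs = m + 2 := by omega
        rw [h1, h2, h3]
        linear_combination (X * Cser M * (X*M)^m) * hM
  intro n
  induction n with
  | zero =>
    intro j
    by_cases h : j = 0
    · subst h
      rw [tri, if_pos rfl]
      simp only [Int.natAbs_zero, pow_zero, mul_one, coeff_zero_eq_constantCoeff]
      rw [Cser, PowerSeries.constantCoeff_inv]
      simp [map_sub, map_mul, map_pow, constantCoeff_X]
    · rw [tri, if_neg h]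
      have hj : j.natAbs ≠ 0 := by omega
      simp [coeff_zero_eq_constantCoeff, map_mul, map_pow, constantCoeff_X,
        zero_mul, zero_pow hj]
  | succ n ih =>
    intro j
    rw [tri]
    push_cast
    rw [ih, ih, ih]
    conv_rhs => rw [FE j]
    rw [map_add, PowerSeries.coeff_succ_X_mul, map_add, map_add]
    have : (coeff (R := ℚ) (n+1)) (if j = 0 then (1 : PowerSeries ℚ) else 0) = 0 := by
      split <;> simp [PowerSeries.coeff_one]
    rw [this, zero_add]
    try ring

/-- The generating function of Grand Motzkin paths equals Σ_{k≥0} z^{2k} M^{2k+1}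
(coefficientwise: only terms with 2k ≤ n contribute to the n-th coefficient). -/
theorem grand_motzkin_gf
    (M : PowerSeries ℚ)
    (hM0 : constantCoeff (R := ℚ) M = 1)
    (hM : M = 1 + X * M + X ^ 2 * M ^ 2) :
    ∀ n : ℕ,
      (coeff (R := ℚ) n) (PowerSeries.mk (fun n =>
        (Nat.card {s : Fin n → ℤ //
          (∀ i, s i = -1 ∨ s i = 0 ∨ s i = 1) ∧ (∑ i, s i) = 0} : ℚ)))
        = ∑ k ∈ Finset.range (n + 1), (coeff (R := ℚ) n) (X ^ (2 * k) * M ^ (2 * k + 1)) := by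
  intro n
  rw [PowerSeries.coeff_mk]
  have hcard : (Nat.card {s : Fin n → ℤ //
      (∀ i, s i = -1 ∨ s i = 0 ∨ s i = 1) ∧ (∑ i, s i) = 0} : ℚ) = (tri n 0 : ℚ) := by
    have := card_gmpath n 0
    rw [show Nat.card {s : Fin n → ℤ //
      (∀ i, s i = -1 ∨ s i = 0 ∨ s i = 1) ∧ (∑ i, s i) = 0} = Nat.card (GMPath n 0) from rfl, this]
  rw [hcard, key M hM n 0]
  simp only [Int.natAbs_zero, pow_zero, mul_one]
  -- Now compute the RHS.
  rw [← map_sum]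
  have hsum : (∑ k ∈ Finset.range (n + 1), (X : PowerSeries ℚ) ^ (2*k) * M ^ (2*k+1))
      = (1 - (X^2 * M^2)^(n+1)) * Cser M := by
    have h1 : (∑ k ∈ Finset.range (n + 1), (X : PowerSeries ℚ) ^ (2*k) * M ^ (2*k+1))
        = (∑ k ∈ Finset.range (n + 1), (X^2 * M^2)^k) * M := by
      rw [Finset.sum_mul]
      refine Finset.sum_congr rfl fun k _ => ?_
      rw [mul_pow, ← pow_mul, ← pow_mul, pow_succ]
      ring
    have hMD : M * (1 - X - 2 * X^2 * M) = 1 - X^2 * M^2 := by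
      linear_combination hM
    have hgeom : (∑ k ∈ Finset.range (n + 1), ((X:PowerSeries ℚ)^2 * M^2)^k) * (1 - X^2*M^2)
        = 1 - (X^2*M^2)^(n+1) := by
      linear_combination -(geom_sum_mul ((X:PowerSeries ℚ)^2 * M^2) (n+1))
    calc (∑ k ∈ Finset.range (n + 1), (X : PowerSeries ℚ) ^ (2*k) * M ^ (2*k+1))
        = (∑ k ∈ Finset.range (n + 1), (X^2 * M^2)^k) * M := h1
      _ = (∑ k ∈ Finset.range (n + 1), (X^2 * M^2)^k) * M *
            ((1 - X - 2 * X^2 * M) * Cser M) := by rw [hDC M, mul_one]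
      _ = ((∑ k ∈ Finset.range (n + 1), (X^2 * M^2)^k) * (M * (1 - X - 2 * X^2 * M))) *
            Cser M := by ring
      _ = (1 - (X^2 * M^2)^(n+1)) * Cser M := by rw [hMD, hgeom]
  rw [hsum, sub_mul, one_mul, map_sub]
  have hdvd : (X : PowerSeries ℚ)^(n+1) ∣ (X^2 * M^2)^(n+1) * Cser M :=
    ⟨X^(n+1) * M^(2*(n+1)) * Cser M, by ring⟩
  have hz : (coeff (R := ℚ) n) ((X^2 * M^2)^(n+1) * Cser M) = 0 :=
    PowerSeries.X_pow_dvd_iff.mp hdvd n (by omega)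
  rw [hz, sub_zero]
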